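/- arXiv:0903.4081 — 3 statements merged into one kernel-verified Lean document; each statement's English description precedes it below -/
import Mathlib

section
/- Let $r: U \to \mathbb{R}$ be a $C^2$ function on an open set $U \subset \mathbb{C}^n$ whose complex Hessian is positive definite (strict plurisubharmonicity), and define the Levi polynomial $F(\zeta,z) = \sum_j \partial_{\zeta_j} r(\zeta)(\zeta_j - z_j) - \frac12 \sum_{j,k} \partial_{\zeta_j}\partial_{\zeta_k} r(\zeta)(\zeta_j - z_j)(\zeta_k - z_k)$ and $\phi(\zeta,z) = F(\zeta,z) - r(\zeta)$. Then for $\zeta, z$ in a compact subset with $r(\zeta) \le 0$ and $r(z) \le 0$ and $|\zeta - z|$ sufficiently small, $|\phi(\zeta,z)| \ge c\big( -r(\zeta) - r(z) + |\zeta - z|^2 + |\operatorname{Im} \phi(\zeta,z)| \big)$ for some constant $c > 0$. -/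
open scoped ComplexConjugate

/-- The Wirtinger derivative `∂f/∂ζ_j` of a (real-differentiable) function
`f : ℂⁿ → ℂ`, namely `(1/2)(∂f/∂x_j - i ∂f/∂y_j)`. -/
noncomputable def wirtD (n : ℕ) (f : EuclideanSpace ℂ (Fin n) → ℂ)
    (ζ : EuclideanSpace ℂ (Fin n)) (j : Fin n) : ℂ :=
  (1 / 2 : ℂ) * (fderiv ℝ f ζ (EuclideanSpace.single j 1) -
    Complex.I * fderiv ℝ f ζ (EuclideanSpace.single j Complex.I))

/-- The conjugate Wirtinger derivative `∂f/∂ζ̄_j = (1/2)(∂f/∂x_j + i ∂f/∂y_j)`. -/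
noncomputable def wirtDBar (n : ℕ) (f : EuclideanSpace ℂ (Fin n) → ℂ)
    (ζ : EuclideanSpace ℂ (Fin n)) (j : Fin n) : ℂ :=
  (1 / 2 : ℂ) * (fderiv ℝ f ζ (EuclideanSpace.single j 1) +
    Complex.I * fderiv ℝ f ζ (EuclideanSpace.single j Complex.I))

/-- The Levi polynomial of `r` at `ζ`:
`F(ζ,z) = ∑_j ∂r/∂ζ_j(ζ)(ζ_j-z_j) - (1/2)∑_{j,k} ∂²r/∂ζ_j∂ζ_k(ζ)(ζ_j-z_j)(ζ_k-z_k)`. -/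
noncomputable def leviPoly (n : ℕ) (r : EuclideanSpace ℂ (Fin n) → ℝ)
    (ζ z : EuclideanSpace ℂ (Fin n)) : ℂ :=
  (∑ j, wirtD n (fun w => (r w : ℂ)) ζ j * (ζ j - z j)) -
    (1 / 2 : ℂ) * ∑ j, ∑ k,
      wirtD n (fun w => wirtD n (fun w' => (r w' : ℂ)) w k) ζ j * (ζ j - z j) * (ζ k - z k)

namespace Stmt8

variable {n : ℕ}

noncomputable def ee (n : ℕ) (j : Fin n) : EuclideanSpace ℂ (Fin n) := EuclideanSpace.single j 1
noncomputable def ffv (n : ℕ) (j : Fin n) : EuclideanSpace ℂ (Fin n) :=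
  EuclideanSpace.single j Complex.I

lemma sum_apply' (g : Fin n → EuclideanSpace ℂ (Fin n)) (m : Fin n) :
    (∑ j, g j) m = ∑ j, g j m := by
  induction (Finset.univ : Finset (Fin n)) using Finset.induction with
  | empty => rfl
  | @insert a s h ih => rw [Finset.sum_insert h, Finset.sum_insert h, ← ih]; rfl

lemma decomp (x : EuclideanSpace ℂ (Fin n)) :
    x = ∑ j, ((x j).re • ee n j + (x j).im • ffv n j) := by
  ext m
  rw [sum_apply']
  have : ∀ j, ((x j).re • ee n j + (x j).im • ffv n j) m
      = (x j).re • (ee n j m) + (x j).im • (ffv n j m) := fun j => rfl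
  simp only [this, ee, ffv, EuclideanSpace.single_apply, smul_eq_mul]
  rw [Finset.sum_eq_single m]
  · simp [Complex.ext_iff]
  · intro b _ hb; simp [Ne.symm hb]
  · simp


lemma fderiv_coe {r : EuclideanSpace ℂ (Fin n) → ℝ} {ζ : EuclideanSpace ℂ (Fin n)}
    (hd : DifferentiableAt ℝ r ζ) (v : EuclideanSpace ℂ (Fin n)) :
    fderiv ℝ (fun w => (r w : ℂ)) ζ v = (fderiv ℝ r ζ v : ℂ) := by
  have : fderiv ℝ (fun w => (r w : ℂ)) ζ = Complex.ofRealCLM.comp (fderiv ℝ r ζ) :=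
    (Complex.ofRealCLM.hasFDerivAt.comp ζ hd.hasFDerivAt).fderiv
  rw [this]; rfl

lemma wirtD_real {r : EuclideanSpace ℂ (Fin n) → ℝ} {ζ : EuclideanSpace ℂ (Fin n)}
    (hd : DifferentiableAt ℝ r ζ) (k : Fin n) :
    wirtD n (fun w => (r w : ℂ)) ζ k
      = (1 / 2 : ℂ) * ((fderiv ℝ r ζ (ee n k) : ℂ) - Complex.I * (fderiv ℝ r ζ (ffv n k) : ℂ)) := by
  rw [wirtD, fderiv_coe hd, fderiv_coe hd]; rfl

lemma wirtDBar_real {r : EuclideanSpace ℂ (Fin n) → ℝ} {ζ : EuclideanSpace ℂ (Fin n)}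
    (hd : DifferentiableAt ℝ r ζ) (k : Fin n) :
    wirtDBar n (fun w => (r w : ℂ)) ζ k
      = (1 / 2 : ℂ) * ((fderiv ℝ r ζ (ee n k) : ℂ) + Complex.I * (fderiv ℝ r ζ (ffv n k) : ℂ)) := by
  rw [wirtDBar, fderiv_coe hd, fderiv_coe hd]; rfl

section Second
variable {U : Set (EuclideanSpace ℂ (Fin n))} {r : EuclideanSpace ℂ (Fin n) → ℝ}
  {ζ : EuclideanSpace ℂ (Fin n)}

lemma diffAt (hU : IsOpen U) (hr : ContDiffOn ℝ 2 r U) (hζ : ζ ∈ U) :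
    DifferentiableAt ℝ r ζ :=
  (hr.differentiableOn (by norm_num)).differentiableAt (hU.mem_nhds hζ)

lemma d1_diffAt (hU : IsOpen U) (hr : ContDiffOn ℝ 2 r U) (hζ : ζ ∈ U) :
    DifferentiableAt ℝ (fderiv ℝ r) ζ := by
  have h1 : ContDiffOn ℝ 1 (fderiv ℝ r) U := hr.fderiv_of_isOpen hU (by norm_num)
  exact (h1.differentiableOn (by norm_num)).differentiableAt (hU.mem_nhds hζ)

/-- derivative of the complexified wirtD-type auxiliary function -/
lemma hasFDerivAt_aux (hU : IsOpen U) (hr : ContDiffOn ℝ 2 r U) (hζ : ζ ∈ U) (k : Fin n) :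
    HasFDerivAt (fun w => (1 / 2 : ℂ) *
        ((fderiv ℝ r w (ee n k) : ℂ) - Complex.I * (fderiv ℝ r w (ffv n k) : ℂ)))
      ((1 / 2 : ℂ) • (Complex.ofRealCLM.comp ((ContinuousLinearMap.apply ℝ ℝ (ee n k)).comp
          (fderiv ℝ (fderiv ℝ r) ζ)) -
        Complex.I • Complex.ofRealCLM.comp ((ContinuousLinearMap.apply ℝ ℝ (ffv n k)).comp
          (fderiv ℝ (fderiv ℝ r) ζ)))) ζ := by
  have hA : HasFDerivAt (fderiv ℝ r) (fderiv ℝ (fderiv ℝ r) ζ) ζ :=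
    (d1_diffAt hU hr hζ).hasFDerivAt
  have h1 := ((ContinuousLinearMap.apply ℝ ℝ (ee n k)).hasFDerivAt.comp ζ hA)
  have h2 := ((ContinuousLinearMap.apply ℝ ℝ (ffv n k)).hasFDerivAt.comp ζ hA)
  have h1' := Complex.ofRealCLM.hasFDerivAt.comp ζ h1
  have h2' := Complex.ofRealCLM.hasFDerivAt.comp ζ h2
  exact (h1'.sub (h2'.const_mul Complex.I)).const_mul (1 / 2 : ℂ)

lemma wirtD_wirtD_eval (hU : IsOpen U) (hr : ContDiffOn ℝ 2 r U) (hζ : ζ ∈ U) (j k : Fin n) :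
    wirtD n (fun w => wirtD n (fun w' => (r w' : ℂ)) w k) ζ j
      = (1 / 4 : ℂ) * ((fderiv ℝ (fderiv ℝ r) ζ (ee n j) (ee n k) : ℂ)
        - Complex.I * (fderiv ℝ (fderiv ℝ r) ζ (ee n j) (ffv n k) : ℂ)
        - Complex.I * (fderiv ℝ (fderiv ℝ r) ζ (ffv n j) (ee n k) : ℂ)
        - (fderiv ℝ (fderiv ℝ r) ζ (ffv n j) (ffv n k) : ℂ)) := by
  have heq : (fun w => wirtD n (fun w' => (r w' : ℂ)) w k) =ᶠ[nhds ζ]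
      (fun w => (1 / 2 : ℂ) *
        ((fderiv ℝ r w (ee n k) : ℂ) - Complex.I * (fderiv ℝ r w (ffv n k) : ℂ))) :=
    Filter.eventuallyEq_of_mem (hU.mem_nhds hζ)
      (fun w hw => wirtD_real (diffAt hU hr hw) k)
  have hfd := heq.fderiv_eq (𝕜 := ℝ)
  have h5 := (hasFDerivAt_aux hU hr hζ k).fderiv
  rw [wirtD, hfd, h5]
  simp only [ContinuousLinearMap.smul_apply, ContinuousLinearMap.sub_apply,
    ContinuousLinearMap.comp_apply, Complex.ofRealCLM_apply,
    ContinuousLinearMap.apply_apply, smul_eq_mul]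
  simp only [ee, ffv]
  ring_nf
  simp only [Complex.I_sq]
  ring

lemma pair1 (d1 d2 : ℝ) (x : ℂ) :
    2 * (((1 / 2 : ℂ) * ((d1 : ℂ) - Complex.I * (d2 : ℂ)) * x).re) = x.re * d1 + x.im * d2 := by
  simp [Complex.mul_re, Complex.mul_im]
  ring

lemma pair_calc (P Q1 Q2 S : ℝ) (x y : ℂ) :
    2 * (((1 / 4 : ℂ) * ((P : ℂ) - Complex.I * (Q1 : ℂ) - Complex.I * (Q2 : ℂ) - (S : ℂ))
        * x * y).re)
    + 2 * (((1 / 4 : ℂ) * ((P : ℂ) + Complex.I * (Q1 : ℂ) - Complex.I * (Q2 : ℂ) + (S : ℂ))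
        * x * (starRingEnd ℂ y)).re)
    = x.re * y.re * P + x.re * y.im * Q1 + x.im * y.re * Q2 + x.im * y.im * S := by
  simp [Complex.mul_re, Complex.mul_im]
  ring

lemma lin (T : EuclideanSpace ℂ (Fin n) →L[ℝ] ℝ) (h : EuclideanSpace ℂ (Fin n)) :
    T h = ∑ j, ((h j).re * T (ee n j) + (h j).im * T (ffv n j)) := by
  conv_lhs => rw [decomp h]
  rw [map_sum]
  exact Finset.sum_congr rfl fun j _ => by
    rw [map_add, map_smul, map_smul]; simp [smul_eq_mul]

lemma bilin (A : EuclideanSpace ℂ (Fin n) →L[ℝ] EuclideanSpace ℂ (Fin n) →L[ℝ] ℝ)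
    (h : EuclideanSpace ℂ (Fin n)) :
    A h h = ∑ j, ∑ k,
      ((h j).re * (h k).re * A (ee n j) (ee n k) + (h j).re * (h k).im * A (ee n j) (ffv n k)
        + (h j).im * (h k).re * A (ffv n j) (ee n k)
        + (h j).im * (h k).im * A (ffv n j) (ffv n k)) := by
  conv_rhs => rw [Finset.sum_comm]
  conv_lhs => rw [decomp h]
  rw [map_sum]
  refine Finset.sum_congr rfl fun k _ => ?_
  rw [map_sum, ContinuousLinearMap.sum_apply]
  refine Finset.sum_congr rfl fun j _ => ?_
  simp only [map_add, map_smul, ContinuousLinearMap.add_apply,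
    ContinuousLinearMap.smul_apply, smul_eq_mul]
  ring
lemma hasFDerivAt_auxBar (hU : IsOpen U) (hr : ContDiffOn ℝ 2 r U) (hζ : ζ ∈ U) (k : Fin n) :
    HasFDerivAt (fun w => (1 / 2 : ℂ) *
        ((fderiv ℝ r w (ee n k) : ℂ) + Complex.I * (fderiv ℝ r w (ffv n k) : ℂ)))
      ((1 / 2 : ℂ) • (Complex.ofRealCLM.comp ((ContinuousLinearMap.apply ℝ ℝ (ee n k)).comp
          (fderiv ℝ (fderiv ℝ r) ζ)) +
        Complex.I • Complex.ofRealCLM.comp ((ContinuousLinearMap.apply ℝ ℝ (ffv n k)).comp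
          (fderiv ℝ (fderiv ℝ r) ζ)))) ζ := by
  have hA : HasFDerivAt (fderiv ℝ r) (fderiv ℝ (fderiv ℝ r) ζ) ζ :=
    (d1_diffAt hU hr hζ).hasFDerivAt
  have h1 := ((ContinuousLinearMap.apply ℝ ℝ (ee n k)).hasFDerivAt.comp ζ hA)
  have h2 := ((ContinuousLinearMap.apply ℝ ℝ (ffv n k)).hasFDerivAt.comp ζ hA)
  have h1' := Complex.ofRealCLM.hasFDerivAt.comp ζ h1
  have h2' := Complex.ofRealCLM.hasFDerivAt.comp ζ h2
  exact (h1'.add (h2'.const_mul Complex.I)).const_mul (1 / 2 : ℂ)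

lemma wirtD_wirtDBar_eval (hU : IsOpen U) (hr : ContDiffOn ℝ 2 r U) (hζ : ζ ∈ U) (j k : Fin n) :
    wirtD n (fun w => wirtDBar n (fun w' => (r w' : ℂ)) w k) ζ j
      = (1 / 4 : ℂ) * ((fderiv ℝ (fderiv ℝ r) ζ (ee n j) (ee n k) : ℂ)
        + Complex.I * (fderiv ℝ (fderiv ℝ r) ζ (ee n j) (ffv n k) : ℂ)
        - Complex.I * (fderiv ℝ (fderiv ℝ r) ζ (ffv n j) (ee n k) : ℂ)
        + (fderiv ℝ (fderiv ℝ r) ζ (ffv n j) (ffv n k) : ℂ)) := by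
  have heq : (fun w => wirtDBar n (fun w' => (r w' : ℂ)) w k) =ᶠ[nhds ζ]
      (fun w => (1 / 2 : ℂ) *
        ((fderiv ℝ r w (ee n k) : ℂ) + Complex.I * (fderiv ℝ r w (ffv n k) : ℂ))) :=
    Filter.eventuallyEq_of_mem (hU.mem_nhds hζ)
      (fun w hw => wirtDBar_real (diffAt hU hr hw) k)
  have hfd := heq.fderiv_eq (𝕜 := ℝ)
  have h5 := (hasFDerivAt_auxBar hU hr hζ k).fderiv
  rw [wirtD, hfd, h5]
  simp only [ContinuousLinearMap.smul_apply, ContinuousLinearMap.add_apply,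
    ContinuousLinearMap.comp_apply, Complex.ofRealCLM_apply,
    ContinuousLinearMap.apply_apply, smul_eq_mul]
  simp only [ee, ffv]
  ring_nf
  simp only [Complex.I_sq]
  ring

lemma sym (hU : IsOpen U) (hr : ContDiffOn ℝ 2 r U) (hζ : ζ ∈ U)
    (v w : EuclideanSpace ℂ (Fin n)) :
    fderiv ℝ (fderiv ℝ r) ζ v w = fderiv ℝ (fderiv ℝ r) ζ w v := by
  refine second_derivative_symmetric_of_eventually (f := r) ?_ (d1_diffAt hU hr hζ).hasFDerivAt v w
  exact Filter.eventually_of_mem (hU.mem_nhds hζ)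
    (fun w hw => (diffAt hU hr hw).hasFDerivAt)

lemma taylor_bound (hU : IsOpen U) (hr : ContDiffOn ℝ 2 r U)
    {x y : EuclideanSpace ℂ (Fin n)} {d η : ℝ} (hη : 0 ≤ η)
    (hball : Metric.closedBall x d ⊆ U)
    (hbound : ∀ w ∈ Metric.closedBall x d,
      ‖fderiv ℝ (fderiv ℝ r) w - fderiv ℝ (fderiv ℝ r) x‖ ≤ η)
    (hy : y ∈ Metric.closedBall x d) :
    |r y - r x - fderiv ℝ r x (y - x)
      - (1 / 2) * (fderiv ℝ (fderiv ℝ r) x (y - x) (y - x))| ≤ η * d * ‖y - x‖ := by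
  have hd0 : 0 ≤ d := le_trans dist_nonneg (Metric.mem_closedBall.1 hy)
  have hxball : x ∈ Metric.closedBall x d := Metric.mem_closedBall_self hd0
  have hxU : x ∈ U := hball hxball
  set D1 := fderiv ℝ r with hD1
  set A := fderiv ℝ (fderiv ℝ r) x with hA
  have hconv : Convex ℝ (Metric.closedBall x d) := convex_closedBall x d
  -- step 1 : bound on ‖D1 w - D1 x - A (w - x)‖
  have step1 : ∀ w ∈ Metric.closedBall x d, ‖D1 w - D1 x - A (w - x)‖ ≤ η * ‖w - x‖ := by
    intro w hw
    have hg : ∀ u ∈ Metric.closedBall x d,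
        HasFDerivWithinAt (fun v => D1 v - (A v - A x)) (fderiv ℝ D1 u - A)
          (Metric.closedBall x d) u := by
      intro u hu
      exact (((d1_diffAt hU hr (hball hu)).hasFDerivAt).sub
        (A.hasFDerivAt.sub_const (A x))).hasFDerivWithinAt
    have hb : ∀ u ∈ Metric.closedBall x d, ‖fderiv ℝ D1 u - A‖ ≤ η := fun u hu => hbound u hu
    have := hconv.norm_image_sub_le_of_norm_hasFDerivWithin_le hg hb hxball hw
    have heq : (D1 w - (A w - A x)) - (D1 x - (A x - A x)) = D1 w - D1 x - A (w - x) := by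
      rw [map_sub]; abel
    rw [heq] at this
    exact this
  -- step 2
  have key : ∀ w ∈ Metric.closedBall x d,
      HasFDerivWithinAt (fun v => r v - D1 x (v - x) - (1 / 2) * (A (v - x) (v - x)))
        (D1 w - D1 x - A (w - x)) (Metric.closedBall x d) w := by
    intro w hw
    have hwU : w ∈ U := hball hw
    have h_r : HasFDerivAt r (D1 w) w := (diffAt hU hr hwU).hasFDerivAt
    have h_u : HasFDerivAt (fun v : EuclideanSpace ℂ (Fin n) => v - x)
        (ContinuousLinearMap.id ℝ _) w := (hasFDerivAt_id w).sub_const x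
    have h_lin : HasFDerivAt (fun v => D1 x (v - x)) (D1 x) w := by
      have h1 := (D1 x).hasFDerivAt.comp w h_u
      rw [ContinuousLinearMap.comp_id] at h1
      exact h1
    have hc : HasFDerivAt (fun v => A (v - x)) A w := by
      have h1 := A.hasFDerivAt.comp w h_u
      rw [ContinuousLinearMap.comp_id] at h1
      exact h1
    have hq : HasFDerivAt (fun v => A (v - x) (v - x))
        ((A (w - x)).comp (ContinuousLinearMap.id ℝ _) + A.flip (w - x)) w :=
      hc.clm_apply h_u
    have hq2 : HasFDerivAt (fun v => (1 / 2 : ℝ) * (A (v - x) (v - x)))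
        (A (w - x)) w := by
      have h2 := hq.const_mul (1 / 2 : ℝ)
      refine h2.congr_fderiv ?_
      ext v
      simp only [ContinuousLinearMap.smul_apply, ContinuousLinearMap.add_apply,
        ContinuousLinearMap.comp_apply, ContinuousLinearMap.coe_id', id_eq,
        ContinuousLinearMap.flip_apply, smul_eq_mul]
      rw [sym hU hr hxU v (w - x)]
      ring
    exact ((h_r.sub h_lin).sub hq2).hasFDerivWithinAt
  have hb2 : ∀ w ∈ Metric.closedBall x d, ‖D1 w - D1 x - A (w - x)‖ ≤ η * d := by
    intro w hw
    refine (step1 w hw).trans ?_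
    have : ‖w - x‖ ≤ d := by
      rw [← dist_eq_norm]; exact Metric.mem_closedBall.1 hw
    exact mul_le_mul_of_nonneg_left this hη
  have := hconv.norm_image_sub_le_of_norm_hasFDerivWithin_le key hb2 hxball hy
  simp only [sub_self, map_zero, mul_zero, sub_zero] at this
  rw [Real.norm_eq_abs] at this
  have heq : r y - D1 x (y - x) - 1 / 2 * (A (y - x) (y - x)) - r x
      = r y - r x - D1 x (y - x) - 1 / 2 * (A (y - x) (y - x)) := by ring
  rwa [heq] at this

end Second
end Stmt8

/-- The estimate (proof of Lemma 2.1): for a `C²` strictly plurisubharmonic function `r`,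
with `φ(ζ,z) = F(ζ,z) - r(ζ)` the modified Levi polynomial, one has
`|φ| ≥ c(-r(ζ) - r(z) + |ζ-z|² + |Im φ|)` on compact subsets, for `ζ, z` in the
closed sublevel set `{r ≤ 0}` with `|ζ-z|` small. -/
theorem stmt_8 (n : ℕ) (U : Set (EuclideanSpace ℂ (Fin n))) (hU : IsOpen U)
    (r : EuclideanSpace ℂ (Fin n) → ℝ) (hr : ContDiffOn ℝ 2 r U)
    (hpsh : ∃ c : ℝ, 0 < c ∧ ∀ ζ ∈ U, ∀ w : Fin n → ℂ,
      c * ∑ j, ‖w j‖ ^ 2 ≤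
        (∑ j, ∑ k,
          wirtD n (fun w' => wirtDBar n (fun w'' => (r w'' : ℂ)) w' k) ζ j *
            w j * conj (w k)).re)
    (φ : EuclideanSpace ℂ (Fin n) → EuclideanSpace ℂ (Fin n) → ℂ)
    (hφ : ∀ ζ z, φ ζ z = leviPoly n r ζ z - (r ζ : ℂ)) :
    ∀ K : Set (EuclideanSpace ℂ (Fin n)), IsCompact K → K ⊆ U →
      ∃ c : ℝ, 0 < c ∧ ∃ δ : ℝ, 0 < δ ∧
        ∀ ζ ∈ K, ∀ z ∈ K, r ζ ≤ 0 → r z ≤ 0 → ‖ζ - z‖ < δ →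
          c * (-r ζ - r z + ‖ζ - z‖ ^ 2 + |(φ ζ z).im|) ≤ ‖φ ζ z‖ := by
  classical
  obtain ⟨c, hc, hLevi⟩ := hpsh
  intro K hK hKU
  obtain ⟨ε, hε, hthick⟩ := hK.exists_thickening_subset_open hU hKU
  set K' := Metric.cthickening (ε / 2) K with hK'def
  have hK'c : IsCompact K' := hK.cthickening
  have hK'U : K' ⊆ U :=
    (Metric.cthickening_subset_thickening' hε (by linarith) K).trans hthick
  have hKK' : K ⊆ K' := Metric.self_subset_cthickening K
  have hD1cd : ContDiffOn ℝ 1 (fderiv ℝ r) U := hr.fderiv_of_isOpen hU (by norm_num)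
  have hAcont : ContinuousOn (fderiv ℝ (fderiv ℝ r)) U :=
    hD1cd.continuousOn_fderiv_of_isOpen hU (le_refl 1)
  have hucont : UniformContinuousOn (fderiv ℝ (fderiv ℝ r)) K' :=
    hK'c.uniformContinuousOn_of_continuous (hAcont.mono hK'U)
  replace hucont := (Metric.uniformContinuousOn_iff (α := EuclideanSpace ℂ (Fin n))
    (β := EuclideanSpace ℂ (Fin n) →L[ℝ] EuclideanSpace ℂ (Fin n) →L[ℝ] ℝ)).1 hucont
  obtain ⟨δ₀, hδ₀, hδ₀'⟩ := hucont (c / 2) (by linarith)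
  refine ⟨min (1 / 4) (c / 8), lt_min (by norm_num) (by linarith), min (ε / 2) δ₀,
    lt_min (by linarith) hδ₀, ?_⟩
  intro ζ hζK z hzK hrζ hrz hdist
  have hζU : ζ ∈ U := hKU hζK
  have hdζ : DifferentiableAt ℝ r ζ := Stmt8.diffAt hU hr hζU
  set h : EuclideanSpace ℂ (Fin n) := z - ζ with hh
  have hnorm : ‖ζ - z‖ = ‖h‖ := by rw [hh, norm_sub_rev]
  have hhδ : ‖h‖ < min (ε / 2) δ₀ := hnorm ▸ hdist
  have hζK' : ζ ∈ K' := hKK' hζK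
  have hballK' : Metric.closedBall ζ ‖h‖ ⊆ K' := by
    intro w hw
    refine Metric.mem_cthickening_of_dist_le w ζ _ _ hζK ?_
    exact le_trans (Metric.mem_closedBall.1 hw)
      (le_of_lt (lt_of_lt_of_le hhδ (min_le_left _ _)))
  have hbound : ∀ w ∈ Metric.closedBall ζ ‖h‖,
      ‖fderiv ℝ (fderiv ℝ r) w - fderiv ℝ (fderiv ℝ r) ζ‖ ≤ c / 2 := by
    intro w hw
    have hd : dist w ζ < δ₀ :=
      lt_of_le_of_lt (Metric.mem_closedBall.1 hw) (lt_of_lt_of_le hhδ (min_le_right _ _))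
    have := hδ₀' w (hballK' hw) ζ hζK' hd
    replace this := lt_of_eq_of_lt (dist_eq_norm (fderiv ℝ (fderiv ℝ r) w) (fderiv ℝ (fderiv ℝ r) ζ)).symm this
    linarith
  have hzball : z ∈ Metric.closedBall ζ ‖h‖ := by
    simp [Metric.mem_closedBall, dist_eq_norm, hh]
  have htay := Stmt8.taylor_bound hU hr (by linarith : (0:ℝ) ≤ c / 2)
    (hballK'.trans hK'U) hbound hzball
  rw [← hh] at htay
  have hcoord : ∀ j, ζ j - z j = -(h j) := by
    intro j
    show ζ j - z j = -(z j - ζ j)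
    ring
  -- first-order sum
  have hS1 : 2 * (∑ j, wirtD n (fun w => (r w : ℂ)) ζ j * (ζ j - z j)).re
      = -(fderiv ℝ r ζ h) := by
    rw [Complex.re_sum, Finset.mul_sum]
    have hterm : ∀ j ∈ Finset.univ, 2 * ((wirtD n (fun w => (r w : ℂ)) ζ j * (ζ j - z j)).re)
        = -((h j).re * (fderiv ℝ r ζ (Stmt8.ee n j))
          + (h j).im * (fderiv ℝ r ζ (Stmt8.ffv n j))) := by
      intro j _
      rw [Stmt8.wirtD_real hdζ j, hcoord j, Stmt8.pair1]
      simp only [Complex.neg_re, Complex.neg_im]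
      ring
    rw [Finset.sum_congr rfl hterm, Stmt8.lin (fderiv ℝ r ζ) h]
    exact Finset.sum_neg_distrib _
  -- second-order identity
  have hS2Λ : fderiv ℝ (fderiv ℝ r) ζ h h
      = 2 * (∑ j, ∑ k, wirtD n (fun w => wirtD n (fun w' => (r w' : ℂ)) w k) ζ j
          * (ζ j - z j) * (ζ k - z k)).re
        + 2 * (∑ j, ∑ k, wirtD n (fun w' => wirtDBar n (fun w'' => (r w'' : ℂ)) w' k) ζ j
          * h j * conj (h k)).re := by
    rw [Stmt8.bilin (fderiv ℝ (fderiv ℝ r) ζ) h]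
    rw [Complex.re_sum, Complex.re_sum, Finset.mul_sum, Finset.mul_sum,
      ← Finset.sum_add_distrib]
    refine Finset.sum_congr rfl fun j _ => ?_
    rw [Complex.re_sum, Complex.re_sum, Finset.mul_sum, Finset.mul_sum,
      ← Finset.sum_add_distrib]
    refine Finset.sum_congr rfl fun k _ => ?_
    rw [Stmt8.wirtD_wirtD_eval hU hr hζU j k, Stmt8.wirtD_wirtDBar_eval hU hr hζU j k,
      hcoord j, hcoord k]
    rw [show ∀ a b cc : ℂ, a * -b * -cc = a * b * cc from fun a b cc => by ring]
    exact (Stmt8.pair_calc _ _ _ _ (h j) (h k)).symm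
  -- Levi form positivity
  have hΛ : c * ‖h‖ ^ 2 ≤ (∑ j, ∑ k,
      wirtD n (fun w' => wirtDBar n (fun w'' => (r w'' : ℂ)) w' k) ζ j
        * h j * conj (h k)).re := by
    have hns : ‖h‖ ^ 2 = ∑ j, ‖h j‖ ^ 2 := by
      rw [EuclideanSpace.norm_eq, Real.sq_sqrt (Finset.sum_nonneg fun j _ => sq_nonneg _)]
    rw [hns]
    exact hLevi ζ hζU (fun j => h j)
  -- real part of φ
  have h12 : ∀ w : ℂ, ((1 / 2 : ℂ) * w).re = (1 / 2) * w.re := by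
    intro w
    rw [show (1 / 2 : ℂ) = ((1 / 2 : ℝ) : ℂ) by norm_num, Complex.re_ofReal_mul]
  have hre : 2 * (φ ζ z).re = -(fderiv ℝ r ζ h)
      - (∑ j, ∑ k, wirtD n (fun w => wirtD n (fun w' => (r w' : ℂ)) w k) ζ j
          * (ζ j - z j) * (ζ k - z k)).re - 2 * r ζ := by
    rw [hφ ζ z]
    unfold leviPoly
    rw [Complex.sub_re, Complex.sub_re, h12, Complex.ofReal_re]
    linarith [hS1]
  -- key lower bound on the real part
  have habs := abs_le.1 htay
  have hsq : ‖h‖ * ‖h‖ = ‖h‖ ^ 2 := (sq ‖h‖).symm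
  have hkey : -r ζ - r z + (c / 2) * ‖h‖ ^ 2 ≤ 2 * (φ ζ z).re := by
    linarith [habs.1, hΛ, hS2Λ, hre, hsq]
  -- conclusion
  have hReφ : (φ ζ z).re ≤ ‖φ ζ z‖ := by
    exact Complex.re_le_norm _
  have hImφ : |(φ ζ z).im| ≤ ‖φ ζ z‖ := by
    exact Complex.abs_im_le_norm _
  rw [hnorm]
  have hnn1 : 0 ≤ -r ζ - r z := by linarith
  have hnn2 : 0 ≤ ‖h‖ ^ 2 := sq_nonneg _
  have hnn3 : 0 ≤ |(φ ζ z).im| := abs_nonneg _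
  have hm1 : min (1 / 4 : ℝ) (c / 8) ≤ 1 / 4 := min_le_left _ _
  have hm2 : min (1 / 4 : ℝ) (c / 8) ≤ c / 8 := min_le_right _ _
  have t1 : min (1 / 4 : ℝ) (c / 8) * (-r ζ - r z) ≤ 1 / 4 * (-r ζ - r z) :=
    mul_le_mul_of_nonneg_right hm1 hnn1
  have t2 : min (1 / 4 : ℝ) (c / 8) * ‖h‖ ^ 2 ≤ c / 8 * ‖h‖ ^ 2 :=
    mul_le_mul_of_nonneg_right hm2 hnn2
  have t3 : min (1 / 4 : ℝ) (c / 8) * |(φ ζ z).im| ≤ 1 / 4 * |(φ ζ z).im| :=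
    mul_le_mul_of_nonneg_right hm1 hnn3
  have hX : min (1 / 4 : ℝ) (c / 8) * (-r ζ - r z + ‖h‖ ^ 2 + |(φ ζ z).im|)
      = min (1 / 4 : ℝ) (c / 8) * (-r ζ - r z) + min (1 / 4 : ℝ) (c / 8) * ‖h‖ ^ 2
        + min (1 / 4 : ℝ) (c / 8) * |(φ ζ z).im| := by ring
  rw [hX]
  linarith [hkey, hReφ, hImφ, t1, t2, t3, norm_nonneg (φ ζ z)]
end

section
/- Let $r$ be a $C^3$ strictly plurisubharmonic function on an open set in $\mathbb{C}^n$, $\phi(\zeta,z) = F(\zeta,z) - r(\zeta)$ with $F$ the Levi polynomial of $r$ at $\zeta$. Then on compact subsets, for $r(\zeta), r(z) \le 0$ and $|\zeta - z|$ small, $|\phi(\zeta,z)| \ge c\big( |\langle \partial r(z), \zeta - z\rangle| + |\zeta - z|^2 \big)$ for some $c > 0$, where $\langle \partial r(z), \zeta - z\rangle = \sum_j \partial_{z_j} r(z)(\zeta_j - z_j)$. -/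
open scoped ComplexConjugate

variable {n : ℕ}

lemma euclid_apply_sum {ι : Type*} [DecidableEq ι] (s : Finset ι) (f : ι → EuclideanSpace ℂ (Fin n)) (k : Fin n) :
    (∑ j ∈ s, f j) k = ∑ j ∈ s, f j k := by
  induction s using Finset.induction with
  | empty => rfl
  | insert _ _ h ih => simp [Finset.sum_insert h, ih]

lemma euclid_sum_single (x : EuclideanSpace ℂ (Fin n)) :
    ∑ j, EuclideanSpace.single j (x j) = x := by
  ext k
  rw [euclid_apply_sum]
  simp [EuclideanSpace.single_apply]

lemma single_decomp (j : Fin n) (c : ℂ) :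
    (EuclideanSpace.single j c : EuclideanSpace ℂ (Fin n)) =
      c.re • EuclideanSpace.single j (1 : ℂ) + c.im • EuclideanSpace.single j Complex.I := by
  ext k
  simp only [PiLp.add_apply, PiLp.smul_apply, EuclideanSpace.single_apply]
  by_cases h : k = j <;> simp [h, Complex.ext_iff]

lemma norm_single_one (j : Fin n) : ‖(EuclideanSpace.single j (1:ℂ) : EuclideanSpace ℂ (Fin n))‖ = 1 := by
  simp [EuclideanSpace.norm_single]

lemma norm_single_I (j : Fin n) : ‖(EuclideanSpace.single j Complex.I : EuclideanSpace ℂ (Fin n))‖ = 1 := by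
  simp [EuclideanSpace.norm_single]

lemma norm_apply_le (x : EuclideanSpace ℂ (Fin n)) (j : Fin n) : ‖x j‖ ≤ ‖x‖ := by
  have := EuclideanSpace.norm_eq x
  have h1 : ‖x j‖^2 ≤ ∑ k, ‖x k‖^2 :=
    Finset.single_le_sum (f := fun k => ‖x k‖^2) (fun k _ => sq_nonneg _) (Finset.mem_univ j)
  calc ‖x j‖ = Real.sqrt (‖x j‖^2) := (Real.sqrt_sq (norm_nonneg _)).symm
    _ ≤ Real.sqrt (∑ k, ‖x k‖^2) := Real.sqrt_le_sqrt h1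
    _ = ‖x‖ := (EuclideanSpace.norm_eq x).symm

lemma sq_norm_eq (x : EuclideanSpace ℂ (Fin n)) : ‖x‖^2 = ∑ k, ‖x k‖^2 := by
  rw [EuclideanSpace.norm_eq, Real.sq_sqrt]
  exact Finset.sum_nonneg fun k _ => sq_nonneg _

variable {n : ℕ} {r : EuclideanSpace ℂ (Fin n) → ℝ} {x : EuclideanSpace ℂ (Fin n)}

lemma clm_single (T : EuclideanSpace ℂ (Fin n) →L[ℝ] ℂ) (j : Fin n) (c : ℂ) :
    T (EuclideanSpace.single j c) =
      (1/2 : ℂ) * (T (EuclideanSpace.single j 1) - Complex.I * T (EuclideanSpace.single j Complex.I)) * c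
      + (1/2 : ℂ) * (T (EuclideanSpace.single j 1) + Complex.I * T (EuclideanSpace.single j Complex.I)) * conj c := by
  rw [single_decomp, map_add, map_smul, map_smul]
  set A := T (EuclideanSpace.single j 1)
  set B := T (EuclideanSpace.single j Complex.I)
  rw [← Complex.re_add_im c]
  simp only [Complex.add_re, Complex.add_im, Complex.ofReal_re, Complex.mul_im, Complex.mul_re,
    Complex.I_re, Complex.I_im, Complex.ofReal_im, map_add, map_mul, Complex.conj_ofReal,
    Complex.conj_I, Complex.real_smul]
  push_cast
  ring_nf
  simp [Complex.I_sq]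

lemma clm_single_real (T : EuclideanSpace ℂ (Fin n) →L[ℝ] ℝ) (j : Fin n) (c : ℂ) :
    T (EuclideanSpace.single j c) =
      c.re * T (EuclideanSpace.single j 1) + c.im * T (EuclideanSpace.single j Complex.I) := by
  rw [single_decomp, map_add, map_smul, map_smul]; simp [smul_eq_mul]

lemma fderiv_ofReal_comp (hd : DifferentiableAt ℝ r x) :
    fderiv ℝ (fun w => (r w : ℂ)) x = Complex.ofRealCLM.comp (fderiv ℝ r x) :=
  (Complex.ofRealCLM.hasFDerivAt.comp x hd.hasFDerivAt).fderiv

lemma wirtD_real (hd : DifferentiableAt ℝ r x) (j : Fin n) :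
    wirtD n (fun w => (r w : ℂ)) x j =
      (1/2 : ℂ) * ((fderiv ℝ r x (EuclideanSpace.single j 1) : ℂ)
        - Complex.I * (fderiv ℝ r x (EuclideanSpace.single j Complex.I) : ℂ)) := by
  rw [wirtD, fderiv_ofReal_comp hd]; rfl

lemma pairing (hd : DifferentiableAt ℝ r x) (w : EuclideanSpace ℂ (Fin n)) :
    fderiv ℝ r x w = 2 * (∑ j, wirtD n (fun w' => (r w' : ℂ)) x j * w j).re := by
  conv_lhs => rw [← euclid_sum_single w, map_sum]
  rw [Complex.re_sum, Finset.mul_sum]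
  refine Finset.sum_congr rfl fun j _ => ?_
  rw [clm_single_real, wirtD_real hd]
  set a := fderiv ℝ r x (EuclideanSpace.single j 1)
  set b := fderiv ℝ r x (EuclideanSpace.single j Complex.I)
  simp [Complex.mul_re, Complex.mul_im, Complex.ofReal_re, Complex.ofReal_im]
  ring
section main
variable {n : ℕ} {U : Set (EuclideanSpace ℂ (Fin n))} {r : EuclideanSpace ℂ (Fin n) → ℝ}
  {x : EuclideanSpace ℂ (Fin n)}

lemma cda3 (hU : IsOpen U) (hr : ContDiffOn ℝ 3 r U) (hx : x ∈ U) : ContDiffAt ℝ 3 r x :=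
  hr.contDiffAt (hU.mem_nhds hx)

lemma cda2 (hU : IsOpen U) (hr : ContDiffOn ℝ 3 r U) (hx : x ∈ U) :
    ContDiffAt ℝ 2 (fderiv ℝ r) x :=
  (cda3 hU hr hx).fderiv_right (by norm_num)

lemma diff1 (hU : IsOpen U) (hr : ContDiffOn ℝ 3 r U) (hx : x ∈ U) : DifferentiableAt ℝ r x :=
  (cda3 hU hr hx).differentiableAt (by norm_num)

lemma hasD2 (hU : IsOpen U) (hr : ContDiffOn ℝ 3 r U) (hx : x ∈ U) :
    HasFDerivAt (fderiv ℝ r) (fderiv ℝ (fderiv ℝ r) x) x :=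
  ((cda2 hU hr hx).differentiableAt (by norm_num)).hasFDerivAt

lemma cda1 (hU : IsOpen U) (hr : ContDiffOn ℝ 3 r U) (hx : x ∈ U) :
    ContDiffAt ℝ 1 (fderiv ℝ (fderiv ℝ r)) x :=
  (cda2 hU hr hx).fderiv_right (by norm_num)

lemma hasD3 (hU : IsOpen U) (hr : ContDiffOn ℝ 3 r U) (hx : x ∈ U) :
    HasFDerivAt (fderiv ℝ (fderiv ℝ r)) (fderiv ℝ (fderiv ℝ (fderiv ℝ r)) x) x :=
  ((cda1 hU hr hx).differentiableAt (by norm_num)).hasFDerivAt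

lemma contD2 (hU : IsOpen U) (hr : ContDiffOn ℝ 3 r U) :
    ContinuousOn (fderiv ℝ (fderiv ℝ r)) U :=
  fun x hx => ((cda1 hU hr hx).continuousAt).continuousWithinAt

lemma contD3 (hU : IsOpen U) (hr : ContDiffOn ℝ 3 r U) :
    ContinuousOn (fderiv ℝ (fderiv ℝ (fderiv ℝ r))) U :=
  fun x hx => (((cda1 hU hr hx).fderiv_right (m := 0) (by norm_num)).continuousAt).continuousWithinAt

end main
section chunk4
variable {n : ℕ} {U : Set (EuclideanSpace ℂ (Fin n))} {r : EuclideanSpace ℂ (Fin n) → ℝ}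
  {x : EuclideanSpace ℂ (Fin n)}

/-- The derivative of `y ↦ wirtD n (fun w => r w) y k`. -/
noncomputable def GkD (r : EuclideanSpace ℂ (Fin n) → ℝ) (x : EuclideanSpace ℂ (Fin n))
    (k : Fin n) : EuclideanSpace ℂ (Fin n) →L[ℝ] ℂ :=
  (1/2 : ℂ) • (Complex.ofRealCLM.comp ((ContinuousLinearMap.apply ℝ ℝ
      (EuclideanSpace.single k (1:ℂ))).comp (fderiv ℝ (fderiv ℝ r) x))
    - Complex.I • Complex.ofRealCLM.comp ((ContinuousLinearMap.apply ℝ ℝ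
      (EuclideanSpace.single k Complex.I)).comp (fderiv ℝ (fderiv ℝ r) x)))

lemma GkD_apply (k : Fin n) (u : EuclideanSpace ℂ (Fin n)) :
    GkD r x k u = (1/2 : ℂ) * ((fderiv ℝ (fderiv ℝ r) x u (EuclideanSpace.single k (1:ℂ)) : ℂ)
      - Complex.I * (fderiv ℝ (fderiv ℝ r) x u (EuclideanSpace.single k Complex.I) : ℂ)) := by
  simp [GkD, smul_eq_mul]

lemma GkD_norm_le (k : Fin n) (u : EuclideanSpace ℂ (Fin n)) :
    ‖GkD r x k u‖ ≤ ‖fderiv ℝ (fderiv ℝ r) x‖ * ‖u‖ := by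
  rw [GkD_apply]
  have h1 : ∀ v : EuclideanSpace ℂ (Fin n), ‖v‖ = 1 →
      |fderiv ℝ (fderiv ℝ r) x u v| ≤ ‖fderiv ℝ (fderiv ℝ r) x‖ * ‖u‖ := by
    intro v hv
    calc |fderiv ℝ (fderiv ℝ r) x u v| ≤ ‖fderiv ℝ (fderiv ℝ r) x u‖ * ‖v‖ :=
          (fderiv ℝ (fderiv ℝ r) x u).le_opNorm v
      _ = ‖fderiv ℝ (fderiv ℝ r) x u‖ := by rw [hv, mul_one]
      _ ≤ ‖fderiv ℝ (fderiv ℝ r) x‖ * ‖u‖ := (fderiv ℝ (fderiv ℝ r) x).le_opNorm u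
  have e1 := h1 _ (norm_single_one (n := n) k)
  have e2 := h1 _ (norm_single_I (n := n) k)
  rw [norm_mul]
  calc ‖(1/2 : ℂ)‖ * ‖((fderiv ℝ (fderiv ℝ r) x u (EuclideanSpace.single k (1:ℂ)) : ℂ)
      - Complex.I * (fderiv ℝ (fderiv ℝ r) x u (EuclideanSpace.single k Complex.I) : ℂ))‖
      ≤ (1/2) * (|fderiv ℝ (fderiv ℝ r) x u (EuclideanSpace.single k (1:ℂ))|
        + |fderiv ℝ (fderiv ℝ r) x u (EuclideanSpace.single k Complex.I)|) := by
        rw [show ‖(1/2:ℂ)‖ = 1/2 by norm_num]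
        gcongr
        refine (norm_sub_le _ _).trans ?_
        simp [Complex.norm_real]
    _ ≤ (1/2) * (‖fderiv ℝ (fderiv ℝ r) x‖ * ‖u‖ + ‖fderiv ℝ (fderiv ℝ r) x‖ * ‖u‖) := by
        gcongr
    _ = ‖fderiv ℝ (fderiv ℝ r) x‖ * ‖u‖ := by ring

lemma hasGk (hU : IsOpen U) (hr : ContDiffOn ℝ 3 r U) (hx : x ∈ U) (k : Fin n) :
    HasFDerivAt (fun y => wirtD n (fun w => (r w : ℂ)) y k) (GkD r x k) x := by
  have h1 : HasFDerivAt (fun y => fderiv ℝ r y (EuclideanSpace.single k (1:ℂ)))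
      ((ContinuousLinearMap.apply ℝ ℝ (EuclideanSpace.single k (1:ℂ))).comp
        (fderiv ℝ (fderiv ℝ r) x)) x :=
    (ContinuousLinearMap.apply ℝ ℝ (EuclideanSpace.single k (1:ℂ))).hasFDerivAt.comp x
      (hasD2 hU hr hx)
  have h2 : HasFDerivAt (fun y => fderiv ℝ r y (EuclideanSpace.single k Complex.I))
      ((ContinuousLinearMap.apply ℝ ℝ (EuclideanSpace.single k Complex.I)).comp
        (fderiv ℝ (fderiv ℝ r) x)) x :=
    (ContinuousLinearMap.apply ℝ ℝ (EuclideanSpace.single k Complex.I)).hasFDerivAt.comp x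
      (hasD2 hU hr hx)
  have h1' := Complex.ofRealCLM.hasFDerivAt.comp x h1
  have h2' := Complex.ofRealCLM.hasFDerivAt.comp x h2
  have h3 := (h1'.sub (h2'.const_mul Complex.I)).const_mul (1/2 : ℂ)
  refine h3.congr_of_eventuallyEq ?_
  filter_upwards [hU.mem_nhds hx] with y hy
  rw [wirtD_real (diff1 hU hr hy) k]
  rfl

lemma fderiv_gk (hU : IsOpen U) (hr : ContDiffOn ℝ 3 r U) (hx : x ∈ U) (k : Fin n) :
    fderiv ℝ (fun y => wirtD n (fun w => (r w : ℂ)) y k) x = GkD r x k :=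
  (hasGk hU hr hx k).fderiv

lemma wirtD_gk (hU : IsOpen U) (hr : ContDiffOn ℝ 3 r U) (hx : x ∈ U) (j k : Fin n) :
    wirtD n (fun y => wirtD n (fun w => (r w : ℂ)) y k) x j =
      (1/2 : ℂ) * (GkD r x k (EuclideanSpace.single j 1)
        - Complex.I * GkD r x k (EuclideanSpace.single j Complex.I)) := by
  rw [wirtD, fderiv_gk hU hr hx]

lemma wirtDBar_gk (hU : IsOpen U) (hr : ContDiffOn ℝ 3 r U) (hx : x ∈ U) (j k : Fin n) :
    wirtDBar n (fun y => wirtD n (fun w => (r w : ℂ)) y k) x j =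
      (1/2 : ℂ) * (GkD r x k (EuclideanSpace.single j 1)
        + Complex.I * GkD r x k (EuclideanSpace.single j Complex.I)) := by
  rw [wirtDBar, fderiv_gk hU hr hx]

lemma H_bound (hU : IsOpen U) (hr : ContDiffOn ℝ 3 r U) (hx : x ∈ U) (j k : Fin n) :
    ‖wirtD n (fun y => wirtD n (fun w => (r w : ℂ)) y k) x j‖ ≤ ‖fderiv ℝ (fderiv ℝ r) x‖ := by
  rw [wirtD_gk hU hr hx, norm_mul]
  have e1 := (GkD_norm_le (r := r) (x := x) k (EuclideanSpace.single j 1))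
  have e2 := (GkD_norm_le (r := r) (x := x) k (EuclideanSpace.single j Complex.I))
  rw [norm_single_one] at e1
  rw [norm_single_I] at e2
  rw [mul_one] at e1 e2
  calc ‖(1/2:ℂ)‖ * ‖GkD r x k (EuclideanSpace.single j 1)
        - Complex.I * GkD r x k (EuclideanSpace.single j Complex.I)‖
      ≤ (1/2) * (‖GkD r x k (EuclideanSpace.single j 1)‖
        + ‖GkD r x k (EuclideanSpace.single j Complex.I)‖) := by
        rw [show ‖(1/2:ℂ)‖ = 1/2 by norm_num]
        gcongr
        refine (norm_sub_le _ _).trans ?_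
        simp
    _ ≤ (1/2) * (‖fderiv ℝ (fderiv ℝ r) x‖ + ‖fderiv ℝ (fderiv ℝ r) x‖) := by gcongr
    _ = ‖fderiv ℝ (fderiv ℝ r) x‖ := by ring

end chunk4
section chunk5
variable {n : ℕ} {U : Set (EuclideanSpace ℂ (Fin n))} {r : EuclideanSpace ℂ (Fin n) → ℝ}
  {x : EuclideanSpace ℂ (Fin n)}

lemma wirtDBar_real (hd : DifferentiableAt ℝ r x) (j : Fin n) :
    wirtDBar n (fun w => (r w : ℂ)) x j =
      (1/2 : ℂ) * ((fderiv ℝ r x (EuclideanSpace.single j 1) : ℂ)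
        + Complex.I * (fderiv ℝ r x (EuclideanSpace.single j Complex.I) : ℂ)) := by
  rw [wirtDBar, fderiv_ofReal_comp hd]; rfl

lemma conj_wirtD (hd : DifferentiableAt ℝ r x) (j : Fin n) :
    conj (wirtD n (fun w => (r w : ℂ)) x j) = wirtDBar n (fun w => (r w : ℂ)) x j := by
  rw [wirtD_real hd, wirtDBar_real hd]
  simp [map_mul, map_ofNat, Complex.conj_I, Complex.conj_ofReal]

lemma hasHk (hU : IsOpen U) (hr : ContDiffOn ℝ 3 r U) (hx : x ∈ U) (k : Fin n) :
    HasFDerivAt (fun y => wirtDBar n (fun w => (r w : ℂ)) y k)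
      (((RCLike.conjCLE : ℂ ≃L[ℝ] ℂ) : ℂ →L[ℝ] ℂ).comp (GkD r x k)) x := by
  have h1 := ((RCLike.conjCLE : ℂ ≃L[ℝ] ℂ) : ℂ →L[ℝ] ℂ).hasFDerivAt.comp x (hasGk hU hr hx k)
  refine h1.congr_of_eventuallyEq ?_
  filter_upwards [hU.mem_nhds hx] with y hy
  have := conj_wirtD (diff1 hU hr hy) k
  simp only [Function.comp_apply]
  rw [← this]
  rfl

lemma P_eq (hU : IsOpen U) (hr : ContDiffOn ℝ 3 r U) (hx : x ∈ U) (j k : Fin n) :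
    wirtD n (fun y => wirtDBar n (fun w => (r w : ℂ)) y k) x j =
      conj (wirtDBar n (fun y => wirtD n (fun w => (r w : ℂ)) y k) x j) := by
  rw [wirtD, (hasHk hU hr hx k).fderiv, wirtDBar_gk hU hr hx]
  simp only [ContinuousLinearMap.coe_comp', Function.comp_apply,
    ContinuousLinearEquiv.coe_coe, RCLike.conjCLE_apply]
  simp [map_mul, map_ofNat, Complex.conj_I]
  ring

end chunk5
section chunk6
variable {n : ℕ} {U : Set (EuclideanSpace ℂ (Fin n))} {r : EuclideanSpace ℂ (Fin n) → ℝ}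
  {x : EuclideanSpace ℂ (Fin n)}

lemma hess (hU : IsOpen U) (hr : ContDiffOn ℝ 3 r U) (hx : x ∈ U)
    (v : EuclideanSpace ℂ (Fin n)) :
    fderiv ℝ (fderiv ℝ r) x v v =
      2 * (∑ j, ∑ k, wirtD n (fun y => wirtD n (fun w => (r w : ℂ)) y k) x j * v j * v k).re +
      2 * (∑ j, ∑ k,
        wirtD n (fun y => wirtDBar n (fun w => (r w : ℂ)) y k) x j * v j * conj (v k)).re := by
  have hS : HasFDerivAt (fun y => ∑ k, wirtD n (fun w => (r w : ℂ)) y k * v k)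
      (∑ k, v k • GkD r x k) x :=
    HasFDerivAt.fun_sum fun k _ => (hasGk hU hr hx k).mul_const (v k)
  have hdir : HasFDerivAt (fun y => fderiv ℝ r y v)
      ((ContinuousLinearMap.apply ℝ ℝ v).comp (fderiv ℝ (fderiv ℝ r) x)) x :=
    (ContinuousLinearMap.apply ℝ ℝ v).hasFDerivAt.comp x (hasD2 hU hr hx)
  have hcong : HasFDerivAt (fun y => fderiv ℝ r y v)
      ((2:ℝ) • (Complex.reCLM.comp (∑ k, v k • GkD r x k))) x := by
    refine HasFDerivAt.congr_of_eventuallyEq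
      ((Complex.reCLM.hasFDerivAt.comp x hS).const_mul (2:ℝ)) ?_
    filter_upwards [hU.mem_nhds hx] with y hy
    exact pairing (diff1 hU hr hy) v
  have huniq := hdir.unique hcong
  have happ : fderiv ℝ (fderiv ℝ r) x v v = 2 * (∑ k, v k * GkD r x k v).re := by
    have h := congrFun (congrArg DFunLike.coe huniq) v
    simpa [ContinuousLinearMap.sum_apply, smul_eq_mul, Complex.re_sum] using h
  have hGkv : ∀ k, GkD r x k v = ∑ j,
      (wirtD n (fun y => wirtD n (fun w => (r w : ℂ)) y k) x j * v j +
        wirtDBar n (fun y => wirtD n (fun w => (r w : ℂ)) y k) x j * conj (v j)) := by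
    intro k
    conv_lhs => rw [← euclid_sum_single v, map_sum]
    refine Finset.sum_congr rfl fun j _ => ?_
    rw [clm_single (GkD r x k) j (v j), wirtD_gk hU hr hx, wirtDBar_gk hU hr hx]
  rw [happ]
  have key : (∑ k, v k * GkD r x k v) =
      (∑ j, ∑ k, wirtD n (fun y => wirtD n (fun w => (r w : ℂ)) y k) x j * v j * v k) +
      (∑ j, ∑ k,
        wirtDBar n (fun y => wirtD n (fun w => (r w : ℂ)) y k) x j * conj (v j) * v k) := by
    rw [Finset.sum_comm (f := fun j k =>
        wirtD n (fun y => wirtD n (fun w => (r w : ℂ)) y k) x j * v j * v k),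
      Finset.sum_comm (f := fun j k =>
        wirtDBar n (fun y => wirtD n (fun w => (r w : ℂ)) y k) x j * conj (v j) * v k),
      ← Finset.sum_add_distrib]
    refine Finset.sum_congr rfl fun k _ => ?_
    rw [hGkv k, Finset.mul_sum, ← Finset.sum_add_distrib]
    refine Finset.sum_congr rfl fun j _ => ?_
    ring
  rw [key, Complex.add_re, mul_add]
  congr 1
  simp only [Complex.re_sum]
  congr 1
  refine Finset.sum_congr rfl fun j _ => ?_
  refine Finset.sum_congr rfl fun k _ => ?_
  rw [P_eq hU hr hx,
    ← Complex.conj_re (wirtDBar n (fun y => wirtD n (fun w => (r w : ℂ)) y k) x j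
      * conj (v j) * v k)]
  congr 1
  simp [map_mul, Complex.conj_conj]
end chunk6
section chunk7
noncomputable instance triCLMnorm {E : Type*} [NormedAddCommGroup E] [NormedSpace ℝ E] :
    NormedAddCommGroup (E →L[ℝ] E →L[ℝ] E →L[ℝ] ℝ) :=
  @ContinuousLinearMap.toNormedAddCommGroup ℝ ℝ E (E →L[ℝ] E →L[ℝ] ℝ) _ _ _ _ _ _ (RingHom.id ℝ) _
variable {n : ℕ} {U : Set (EuclideanSpace ℂ (Fin n))} {r : EuclideanSpace ℂ (Fin n) → ℝ}
  {ζ z : EuclideanSpace ℂ (Fin n)} {ρ M : ℝ}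

lemma lip_D1 (hU : IsOpen U) (hr : ContDiffOn ℝ 3 r U)
    (hball : Metric.closedBall ζ ρ ⊆ U)
    (hM : ∀ y ∈ Metric.closedBall ζ ρ, ‖fderiv ℝ (fderiv ℝ r) y‖ ≤ M)
    (hz : z ∈ Metric.closedBall ζ ρ) :
    ‖fderiv ℝ r z - fderiv ℝ r ζ‖ ≤ M * ‖z - ζ‖ := by
  have hρ : 0 ≤ ρ := le_trans dist_nonneg (Metric.mem_closedBall.1 hz)
  exact (convex_closedBall ζ ρ).norm_image_sub_le_of_norm_fderiv_le
    (fun y hy => ((hasD2 hU hr (hball hy)).differentiableAt))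
    (fun y hy => hM y hy) (Metric.mem_closedBall_self hρ) hz

lemma lip_D2 (hU : IsOpen U) (hr : ContDiffOn ℝ 3 r U)
    (hball : Metric.closedBall ζ ρ ⊆ U)
    (hM : ∀ y ∈ Metric.closedBall ζ ρ, ‖fderiv ℝ (fderiv ℝ (fderiv ℝ r)) y‖ ≤ M)
    (hz : z ∈ Metric.closedBall ζ ρ) :
    ‖fderiv ℝ (fderiv ℝ r) z - fderiv ℝ (fderiv ℝ r) ζ‖ ≤ M * ‖z - ζ‖ := by
  have hρ : 0 ≤ ρ := le_trans dist_nonneg (Metric.mem_closedBall.1 hz)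
  exact (convex_closedBall ζ ρ).norm_image_sub_le_of_norm_fderiv_le (𝕜 := ℝ) (f := fderiv ℝ (fderiv ℝ r))
    (fun y hy => ((hasD3 hU hr (hball hy)).differentiableAt))
    (fun y hy => hM y hy) (Metric.mem_closedBall_self hρ) hz

lemma taylor1 (hU : IsOpen U) (hr : ContDiffOn ℝ 3 r U)
    (hball : Metric.closedBall ζ ρ ⊆ U) (hMnn : 0 ≤ M)
    (hM : ∀ y ∈ Metric.closedBall ζ ρ, ‖fderiv ℝ (fderiv ℝ (fderiv ℝ r)) y‖ ≤ M)
    (hz : z ∈ Metric.closedBall ζ ρ) :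
    ‖fderiv ℝ r z - fderiv ℝ r ζ - fderiv ℝ (fderiv ℝ r) ζ (z - ζ)‖ ≤ M * ‖z - ζ‖ ^ 2 := by
  have hsub : Metric.closedBall ζ ‖z - ζ‖ ⊆ Metric.closedBall ζ ρ := by
    apply Metric.closedBall_subset_closedBall
    rw [← dist_eq_norm]; exact Metric.mem_closedBall.1 hz
  have h := (convex_closedBall ζ ‖z - ζ‖).norm_image_sub_le_of_norm_fderiv_le'
    (f := fderiv ℝ r) (φ := fderiv ℝ (fderiv ℝ r) ζ) (C := M * ‖z - ζ‖)
    (fun y hy => (hasD2 hU hr (hball (hsub hy))).differentiableAt)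
    (fun y hy => ?_) (Metric.mem_closedBall_self (norm_nonneg _))
    (by rw [Metric.mem_closedBall, dist_eq_norm])
  · calc ‖fderiv ℝ r z - fderiv ℝ r ζ - fderiv ℝ (fderiv ℝ r) ζ (z - ζ)‖
        ≤ M * ‖z - ζ‖ * ‖z - ζ‖ := h
      _ = M * ‖z - ζ‖ ^ 2 := by ring
  · have := lip_D2 hU hr hball hM (hsub hy)
    calc ‖fderiv ℝ (fderiv ℝ r) y - fderiv ℝ (fderiv ℝ r) ζ‖ ≤ M * ‖y - ζ‖ := this
      _ ≤ M * ‖z - ζ‖ := by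
          have : ‖y - ζ‖ ≤ ‖z - ζ‖ := by
            rw [← dist_eq_norm]; exact Metric.mem_closedBall.1 hy
          exact mul_le_mul_of_nonneg_left this hMnn

end chunk7
section chunk8
variable {n : ℕ} {U : Set (EuclideanSpace ℂ (Fin n))} {r : EuclideanSpace ℂ (Fin n) → ℝ}
  {ζ z : EuclideanSpace ℂ (Fin n)} {ρ M : ℝ}

lemma taylor0 (hU : IsOpen U) (hr : ContDiffOn ℝ 3 r U)
    (hball : Metric.closedBall ζ ρ ⊆ U) (hMnn : 0 ≤ M)
    (hM : ∀ y ∈ Metric.closedBall ζ ρ, ‖fderiv ℝ (fderiv ℝ (fderiv ℝ r)) y‖ ≤ M)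
    (hz : z ∈ Metric.closedBall ζ ρ) :
    |r z - r ζ - fderiv ℝ r ζ (z - ζ)
      - (1/2) * fderiv ℝ (fderiv ℝ r) ζ (z - ζ) (z - ζ)| ≤ M * ‖z - ζ‖ ^ 3 := by
  have hρ : 0 ≤ ρ := le_trans dist_nonneg (Metric.mem_closedBall.1 hz)
  have hζU : ζ ∈ U := hball (Metric.mem_closedBall_self hρ)
  have hsub : Metric.closedBall ζ ‖z - ζ‖ ⊆ Metric.closedBall ζ ρ := by
    apply Metric.closedBall_subset_closedBall
    rw [← dist_eq_norm]; exact Metric.mem_closedBall.1 hz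
  have hsym : ∀ u w, fderiv ℝ (fderiv ℝ r) ζ u w = fderiv ℝ (fderiv ℝ r) ζ w u := by
    intro u w
    refine second_derivative_symmetric_of_eventually (f := r) ?_ (hasD2 hU hr hζU) u w
    filter_upwards [hU.mem_nhds hζU] with y hy
    exact (diff1 hU hr hy).hasFDerivAt
  set G : EuclideanSpace ℂ (Fin n) → ℝ := fun x => r x - fderiv ℝ r ζ (x - ζ)
    - (1/2) * fderiv ℝ (fderiv ℝ r) ζ (x - ζ) (x - ζ) with hG
  have hGd : ∀ x ∈ Metric.closedBall ζ ‖z - ζ‖, HasFDerivAt G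
      (fderiv ℝ r x - fderiv ℝ r ζ - fderiv ℝ (fderiv ℝ r) ζ (x - ζ)) x := by
    intro x hx
    have hxU : x ∈ U := hball (hsub hx)
    have h1 : HasFDerivAt r (fderiv ℝ r x) x := (diff1 hU hr hxU).hasFDerivAt
    have hid : HasFDerivAt (fun y : EuclideanSpace ℂ (Fin n) => y - ζ)
        (ContinuousLinearMap.id ℝ (EuclideanSpace ℂ (Fin n))) x :=
      (hasFDerivAt_id x).sub_const ζ
    have h2 : HasFDerivAt (fun y => fderiv ℝ r ζ (y - ζ)) (fderiv ℝ r ζ) x := by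
      have := (fderiv ℝ r ζ).hasFDerivAt.comp x hid
      rwa [ContinuousLinearMap.comp_id] at this
    have h3 := (fderiv ℝ (fderiv ℝ r) ζ).hasFDerivAt_of_bilinear hid hid
    have h4 := h3.const_mul (1/2 : ℝ)
    have h5 := (h1.sub h2).sub h4
    refine h5.congr_fderiv ?_
    ext u
    simp only [ContinuousLinearMap.coe_sub', Pi.sub_apply, ContinuousLinearMap.smul_apply,
      ContinuousLinearMap.add_apply, ContinuousLinearMap.precompR_apply,
      ContinuousLinearMap.precompL_apply, ContinuousLinearMap.compL_apply,
      ContinuousLinearMap.coe_comp', Function.comp_apply,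
      ContinuousLinearMap.coe_id', id_eq, smul_eq_mul]
    rw [hsym u (x - ζ)]
    ring
  have hMV := (convex_closedBall ζ ‖z - ζ‖).norm_image_sub_le_of_norm_hasFDerivWithin_le
    (f := G) (C := M * ‖z - ζ‖ ^ 2)
    (fun x hx => (hGd x hx).hasFDerivWithinAt)
    (fun x hx => ?_)
    (Metric.mem_closedBall_self (norm_nonneg _))
    (by rw [Metric.mem_closedBall, dist_eq_norm])
  · have hGζ : G ζ = r ζ := by simp [hG]
    have hGz : G z = r z - fderiv ℝ r ζ (z - ζ)
        - (1/2) * fderiv ℝ (fderiv ℝ r) ζ (z - ζ) (z - ζ) := rfl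
    calc |r z - r ζ - fderiv ℝ r ζ (z - ζ)
          - (1/2) * fderiv ℝ (fderiv ℝ r) ζ (z - ζ) (z - ζ)|
        = ‖G z - G ζ‖ := by rw [hGζ, hGz, Real.norm_eq_abs]; ring_nf
      _ ≤ M * ‖z - ζ‖ ^ 2 * ‖z - ζ‖ := hMV
      _ = M * ‖z - ζ‖ ^ 3 := by ring
  · have h := taylor1 hU hr hball hMnn hM (hsub hx)
    calc ‖fderiv ℝ r x - fderiv ℝ r ζ - fderiv ℝ (fderiv ℝ r) ζ (x - ζ)‖
        ≤ M * ‖x - ζ‖ ^ 2 := taylor1 hU hr hball hMnn hM (hsub hx)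
      _ ≤ M * ‖z - ζ‖ ^ 2 := by
          have hxz : ‖x - ζ‖ ≤ ‖z - ζ‖ := by
            rw [← dist_eq_norm]; exact Metric.mem_closedBall.1 hx
          have := pow_le_pow_left₀ (norm_nonneg _) hxz 2
          exact mul_le_mul_of_nonneg_left this hMnn

end chunk8
section chunk9
variable {n : ℕ} {U : Set (EuclideanSpace ℂ (Fin n))} {r : EuclideanSpace ℂ (Fin n) → ℝ}
  {ζ z : EuclideanSpace ℂ (Fin n)}

lemma wirtD_diff_bound (hζ : DifferentiableAt ℝ r ζ) (hz : DifferentiableAt ℝ r z) (j : Fin n) :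
    ‖wirtD n (fun w => (r w : ℂ)) z j - wirtD n (fun w => (r w : ℂ)) ζ j‖ ≤
      ‖fderiv ℝ r z - fderiv ℝ r ζ‖ := by
  rw [wirtD_real hz, wirtD_real hζ]
  have e1 : ∀ v : EuclideanSpace ℂ (Fin n), ‖v‖ = 1 →
      |fderiv ℝ r z v - fderiv ℝ r ζ v| ≤ ‖fderiv ℝ r z - fderiv ℝ r ζ‖ := by
    intro v hv
    calc |fderiv ℝ r z v - fderiv ℝ r ζ v| = ‖(fderiv ℝ r z - fderiv ℝ r ζ) v‖ := by
          rw [ContinuousLinearMap.sub_apply]; rfl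
      _ ≤ ‖fderiv ℝ r z - fderiv ℝ r ζ‖ * ‖v‖ := ContinuousLinearMap.le_opNorm _ _
      _ = ‖fderiv ℝ r z - fderiv ℝ r ζ‖ := by rw [hv, mul_one]
  have h1 := e1 _ (norm_single_one (n := n) j)
  have h2 := e1 _ (norm_single_I (n := n) j)
  set a1 := fderiv ℝ r z (EuclideanSpace.single j 1)
  set a2 := fderiv ℝ r ζ (EuclideanSpace.single j 1)
  set b1 := fderiv ℝ r z (EuclideanSpace.single j Complex.I)
  set b2 := fderiv ℝ r ζ (EuclideanSpace.single j Complex.I)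
  have key : (1/2 : ℂ) * ((a1:ℂ) - Complex.I * (b1:ℂ)) - (1/2 : ℂ) * ((a2:ℂ) - Complex.I * (b2:ℂ))
      = (1/2 : ℂ) * (((a1 - a2 : ℝ):ℂ) - Complex.I * ((b1 - b2 : ℝ):ℂ)) := by
    push_cast; ring
  rw [key, norm_mul]
  calc ‖(1/2:ℂ)‖ * ‖((a1 - a2 : ℝ):ℂ) - Complex.I * ((b1 - b2 : ℝ):ℂ)‖
      ≤ (1/2) * (|a1 - a2| + |b1 - b2|) := by
        rw [show ‖(1/2:ℂ)‖ = 1/2 by norm_num]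
        gcongr
        refine (norm_sub_le _ _).trans ?_
        simp [← Complex.ofReal_sub, Complex.norm_real]
    _ ≤ (1/2) * (‖fderiv ℝ r z - fderiv ℝ r ζ‖ + ‖fderiv ℝ r z - fderiv ℝ r ζ‖) := by gcongr
    _ = ‖fderiv ℝ r z - fderiv ℝ r ζ‖ := by ring

end chunk9
set_option maxHeartbeats 2000000 in
/-- Lemma 2.1: for a `C³` strictly plurisubharmonic function `r`, with
`φ(ζ,z) = F(ζ,z) - r(ζ)` the modified Levi polynomial, one has
`|φ(ζ,z)| ≥ c(|⟨∂r(z), ζ-z⟩| + |ζ-z|²)` on compact subsets, for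
`r(ζ), r(z) ≤ 0` and `|ζ-z|` small. -/
theorem stmt_9 (n : ℕ) (U : Set (EuclideanSpace ℂ (Fin n))) (hU : IsOpen U)
    (r : EuclideanSpace ℂ (Fin n) → ℝ) (hr : ContDiffOn ℝ 3 r U)
    (hpsh : ∃ c : ℝ, 0 < c ∧ ∀ ζ ∈ U, ∀ w : Fin n → ℂ,
      c * ∑ j, ‖w j‖ ^ 2 ≤
        (∑ j, ∑ k,
          wirtD n (fun w' => wirtDBar n (fun w'' => (r w'' : ℂ)) w' k) ζ j *
            w j * conj (w k)).re)
    (φ : EuclideanSpace ℂ (Fin n) → EuclideanSpace ℂ (Fin n) → ℂ)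
    (hφ : ∀ ζ z, φ ζ z = leviPoly n r ζ z - (r ζ : ℂ)) :
    ∀ K : Set (EuclideanSpace ℂ (Fin n)), IsCompact K → K ⊆ U →
      ∃ c : ℝ, 0 < c ∧ ∃ δ : ℝ, 0 < δ ∧
        ∀ ζ ∈ K, ∀ z ∈ K, r ζ ≤ 0 → r z ≤ 0 → ‖ζ - z‖ < δ →
          c * (‖∑ j, wirtD n (fun w => (r w : ℂ)) z j * (ζ j - z j)‖ + ‖ζ - z‖ ^ 2) ≤
            ‖φ ζ z‖ := by
  intro K hK hKU
  obtain ⟨c₀, hc₀, hpsh'⟩ := hpsh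
  obtain ⟨δ₁, hδ₁, hthick⟩ := hK.exists_cthickening_subset_open hU hKU
  have hK' : IsCompact (Metric.cthickening δ₁ K) := hK.cthickening
  obtain ⟨M₂', hM₂'⟩ := hK'.exists_bound_of_continuousOn (f := fderiv ℝ (fderiv ℝ r)) ((contD2 hU hr).mono hthick)
  obtain ⟨M₃', hM₃'⟩ := hK'.exists_bound_of_continuousOn (f := fderiv ℝ (fderiv ℝ (fderiv ℝ r))) ((contD3 hU hr).mono hthick)
  set M2 : ℝ := max M₂' 0 with hM2def
  set M3 : ℝ := max M₃' 1 with hM3def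
  have hM2nn : 0 ≤ M2 := le_max_right _ _
  have hM3pos : 0 < M3 := lt_of_lt_of_le one_pos (le_max_right _ _)
  have hM2 : ∀ y ∈ Metric.cthickening δ₁ K, ‖fderiv ℝ (fderiv ℝ r) y‖ ≤ M2 :=
    fun y hy => (hM₂' y hy).trans (le_max_left _ _)
  have hM3 : ∀ y ∈ Metric.cthickening δ₁ K, ‖fderiv ℝ (fderiv ℝ (fderiv ℝ r)) y‖ ≤ M3 :=
    fun y hy => (hM₃' y hy).trans (le_max_left _ _)
  have hfrac : 0 ≤ 4 / c₀ := div_nonneg (by norm_num) hc₀.le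
  have hcoef : 0 ≤ ((n:ℝ)^2/2 + n) * M2 + 1 :=
    add_nonneg (mul_nonneg (by positivity) hM2nn) zero_le_one
  set C : ℝ := 3 + (((n:ℝ)^2/2 + n) * M2 + 1) * (4 / c₀) with hCdef
  have hCpos : 0 < C := by
    have := mul_nonneg hcoef hfrac
    rw [hCdef]; linarith
  refine ⟨C⁻¹, inv_pos.2 hCpos, min δ₁ (c₀ / (2 * M3)),
    lt_min hδ₁ (div_pos hc₀ (by linarith)), ?_⟩
  intro ζ hζ z hz hrζ hrz hdist
  have hζU : ζ ∈ U := hKU hζ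
  have hzU : z ∈ U := hKU hz
  have hballK' : Metric.closedBall ζ δ₁ ⊆ Metric.cthickening δ₁ K :=
    Metric.closedBall_subset_cthickening hζ δ₁
  have hballU : Metric.closedBall ζ δ₁ ⊆ U := hballK'.trans hthick
  have hnorm_rev : ‖z - ζ‖ = ‖ζ - z‖ := norm_sub_rev _ _
  have hzball : z ∈ Metric.closedBall ζ δ₁ := by
    rw [Metric.mem_closedBall, dist_eq_norm, hnorm_rev]
    exact le_of_lt (lt_of_lt_of_le hdist (min_le_left _ _))
  have hM3ball : ∀ y ∈ Metric.closedBall ζ δ₁, ‖fderiv ℝ (fderiv ℝ (fderiv ℝ r)) y‖ ≤ M3 :=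
    fun y hy => hM3 y (hballK' hy)
  have hM2ball : ∀ y ∈ Metric.closedBall ζ δ₁, ‖fderiv ℝ (fderiv ℝ r) y‖ ≤ M2 :=
    fun y hy => hM2 y (hballK' hy)
  have htay := taylor0 hU hr hballU (le_of_lt hM3pos) hM3ball hzball
  rw [hnorm_rev] at htay
  have hcoord : ∀ j, (z - ζ : EuclideanSpace ℂ (Fin n)) j = -(ζ j - z j) := by
    intro j; simp [PiLp.sub_apply]
  have hwj : ∀ j, ‖ζ j - z j‖ ≤ ‖ζ - z‖ := by
    intro j
    have h := norm_apply_le (ζ - z) j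
    simpa [PiLp.sub_apply] using h
  -- first derivative identity
  have hp := pairing (diff1 hU hr hζU) (z - ζ)
  have hsum1 : (∑ j, wirtD n (fun w => (r w : ℂ)) ζ j * (z - ζ : EuclideanSpace ℂ (Fin n)) j)
      = -∑ j, wirtD n (fun w => (r w : ℂ)) ζ j * (ζ j - z j) := by
    rw [← Finset.sum_neg_distrib]
    refine Finset.sum_congr rfl fun j _ => ?_
    rw [hcoord j]; ring
  have hD1 : fderiv ℝ r ζ (z - ζ)
      = -(2 * (∑ j, wirtD n (fun w => (r w : ℂ)) ζ j * (ζ j - z j)).re) := by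
    rw [hp, hsum1, Complex.neg_re]; ring
  -- second derivative identity
  have hh := hess hU hr hζU (z - ζ)
  have e1 : (∑ j, ∑ k, wirtD n (fun w => wirtD n (fun w' => (r w' : ℂ)) w k) ζ j
        * (z - ζ : EuclideanSpace ℂ (Fin n)) j * (z - ζ : EuclideanSpace ℂ (Fin n)) k)
      = ∑ j, ∑ k, wirtD n (fun w => wirtD n (fun w' => (r w' : ℂ)) w k) ζ j
        * (ζ j - z j) * (ζ k - z k) := by
    refine Finset.sum_congr rfl fun j _ => Finset.sum_congr rfl fun k _ => ?_
    rw [hcoord j, hcoord k]; ring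
  have e2 : (∑ j, ∑ k, wirtD n (fun w => wirtDBar n (fun w' => (r w' : ℂ)) w k) ζ j
        * (z - ζ : EuclideanSpace ℂ (Fin n)) j * conj ((z - ζ : EuclideanSpace ℂ (Fin n)) k))
      = ∑ j, ∑ k, wirtD n (fun w => wirtDBar n (fun w' => (r w' : ℂ)) w k) ζ j
        * (ζ j - z j) * conj (ζ k - z k) := by
    refine Finset.sum_congr rfl fun j _ => Finset.sum_congr rfl fun k _ => ?_
    rw [hcoord j, hcoord k, map_neg]; ring
  rw [e1, e2] at hh
  -- plurisubharmonicity
  have hL0 := hpsh' ζ hζU (fun j => ζ j - z j)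
  simp only at hL0
  have hsq : (∑ j, ‖ζ j - z j‖^2) = ‖ζ - z‖^2 := by
    rw [sq_norm_eq (ζ - z)]
    exact Finset.sum_congr rfl fun j _ => by rw [PiLp.sub_apply]
  have hL : c₀ * ‖ζ - z‖^2 ≤ (∑ j, ∑ k, wirtD n (fun w => wirtDBar n (fun w' => (r w' : ℂ)) w k)
      ζ j * (ζ j - z j) * conj (ζ k - z k)).re := by
    rw [← hsq]; exact hL0
  -- Levi polynomial decomposition
  have hF : leviPoly n r ζ z
      = (∑ j, wirtD n (fun w => (r w : ℂ)) ζ j * (ζ j - z j))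
        - (1/2:ℂ) * ∑ j, ∑ k, wirtD n (fun w => wirtD n (fun w' => (r w' : ℂ)) w k) ζ j
          * (ζ j - z j) * (ζ k - z k) := rfl
  set Aζ := ∑ j, wirtD n (fun w => (r w : ℂ)) ζ j * (ζ j - z j) with hAζdef
  set Az := ∑ j, wirtD n (fun w => (r w : ℂ)) z j * (ζ j - z j) with hAzdef
  set Bq := ∑ j, ∑ k, wirtD n (fun w => wirtD n (fun w' => (r w' : ℂ)) w k) ζ j
    * (ζ j - z j) * (ζ k - z k) with hBqdef
  set Lq := ∑ j, ∑ k, wirtD n (fun w => wirtDBar n (fun w' => (r w' : ℂ)) w k) ζ j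
    * (ζ j - z j) * conj (ζ k - z k) with hLqdef
  have hφre : (φ ζ z).re = Aζ.re - (1/2) * Bq.re - r ζ := by
    rw [hφ ζ z, hF]
    have h12 : ((1/2 : ℂ)) = ((1/2:ℝ):ℂ) := by norm_num
    rw [h12]
    simp [Complex.sub_re, Complex.re_ofReal_mul, Complex.ofReal_re]
  have hTay2 : |r z - r ζ + 2*Aζ.re - Bq.re - Lq.re| ≤ M3 * ‖ζ - z‖^3 := by
    have heq : r z - r ζ + 2*Aζ.re - Bq.re - Lq.re
        = r z - r ζ - fderiv ℝ r ζ (z - ζ)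
          - (1/2) * fderiv ℝ (fderiv ℝ r) ζ (z - ζ) (z - ζ) := by
      rw [hD1, hh]; ring
    rw [heq]; exact htay
  have habs := abs_le.1 hTay2
  have hM3t : M3 * ‖ζ - z‖ ≤ c₀ / 2 := by
    have h2 : ‖ζ - z‖ ≤ c₀ / (2 * M3) := le_of_lt (lt_of_lt_of_le hdist (min_le_right _ _))
    calc M3 * ‖ζ - z‖ ≤ M3 * (c₀/(2*M3)) := by gcongr
      _ = c₀/2 := by field_simp
  have hcube : M3 * ‖ζ - z‖^3 ≤ (c₀/2) * ‖ζ - z‖^2 := by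
    have h := mul_le_mul_of_nonneg_right hM3t (sq_nonneg ‖ζ - z‖)
    calc M3 * ‖ζ - z‖^3 = (M3 * ‖ζ - z‖) * ‖ζ - z‖^2 := by ring
      _ ≤ (c₀/2) * ‖ζ - z‖^2 := h
  have hre1 : (c₀/4) * ‖ζ - z‖^2 + (-(r ζ))/2 ≤ (φ ζ z).re := by
    rw [hφre]
    linarith [habs.1, hL, hcube, hrz]
  have hrefle : (φ ζ z).re ≤ ‖φ ζ z‖ := by
    exact Complex.re_le_norm _
  have ht2nn : 0 ≤ (c₀/4) * ‖ζ - z‖^2 := by positivity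
  have hrζφ : -(r ζ) ≤ 2 * ‖φ ζ z‖ := by linarith
  have hφt2 : (c₀/4) * ‖ζ - z‖^2 ≤ ‖φ ζ z‖ := by linarith
  -- bound on Bq
  have hHb : ∀ j k : Fin n, ‖wirtD n (fun w => wirtD n (fun w' => (r w' : ℂ)) w k) ζ j‖ ≤ M2 :=
    fun j k => (H_bound hU hr hζU j k).trans (hM2 ζ (Metric.self_subset_cthickening K hζ))
  have hBqb : ‖Bq‖ ≤ (n:ℝ)^2 * (M2 * ‖ζ - z‖^2) := by
    rw [hBqdef]
    refine le_trans (norm_sum_le _ _) ?_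
    have hterm : ∀ j : Fin n, ‖∑ k, wirtD n (fun w => wirtD n (fun w' => (r w' : ℂ)) w k) ζ j
        * (ζ j - z j) * (ζ k - z k)‖ ≤ (n:ℝ) * (M2 * ‖ζ - z‖^2) := by
      intro j
      refine le_trans (norm_sum_le _ _) ?_
      have hterm2 : ∀ k : Fin n, ‖wirtD n (fun w => wirtD n (fun w' => (r w' : ℂ)) w k) ζ j
          * (ζ j - z j) * (ζ k - z k)‖ ≤ M2 * ‖ζ - z‖^2 := by
        intro k
        rw [norm_mul, norm_mul]
        calc ‖wirtD n (fun w => wirtD n (fun w' => (r w' : ℂ)) w k) ζ j‖ * ‖ζ j - z j‖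
              * ‖ζ k - z k‖
            ≤ (M2 * ‖ζ - z‖) * ‖ζ - z‖ := by
              refine mul_le_mul ?_ (hwj k) (norm_nonneg _) (by positivity)
              exact mul_le_mul (hHb j k) (hwj j) (norm_nonneg _) hM2nn
          _ = M2 * ‖ζ - z‖^2 := by ring
      refine le_trans (Finset.sum_le_sum fun k _ => hterm2 k) ?_
      rw [Finset.sum_const, Finset.card_univ, Fintype.card_fin, nsmul_eq_mul]
    refine le_trans (Finset.sum_le_sum fun j _ => hterm j) ?_
    rw [Finset.sum_const, Finset.card_univ, Fintype.card_fin, nsmul_eq_mul]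
    ring_nf
    exact le_refl _
  -- bound on Az - Aζ
  have hlip := lip_D1 hU hr hballU hM2ball hzball
  rw [hnorm_rev] at hlip
  have hdiffsum : Az - Aζ = ∑ j, (wirtD n (fun w => (r w : ℂ)) z j
      - wirtD n (fun w => (r w : ℂ)) ζ j) * (ζ j - z j) := by
    rw [hAzdef, hAζdef, ← Finset.sum_sub_distrib]
    exact Finset.sum_congr rfl fun j _ => by ring
  have hAzAζ : ‖Az - Aζ‖ ≤ (n:ℝ) * (M2 * ‖ζ - z‖^2) := by
    rw [hdiffsum]
    refine le_trans (norm_sum_le _ _) ?_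
    have hterm : ∀ j : Fin n, ‖(wirtD n (fun w => (r w : ℂ)) z j
        - wirtD n (fun w => (r w : ℂ)) ζ j) * (ζ j - z j)‖ ≤ M2 * ‖ζ - z‖^2 := by
      intro j
      rw [norm_mul]
      calc ‖wirtD n (fun w => (r w : ℂ)) z j - wirtD n (fun w => (r w : ℂ)) ζ j‖ * ‖ζ j - z j‖
          ≤ (M2 * ‖ζ - z‖) * ‖ζ - z‖ := by
            refine mul_le_mul ?_ (hwj j) (norm_nonneg _) (by positivity)
            exact (wirtD_diff_bound (diff1 hU hr hζU) (diff1 hU hr hzU) j).trans hlip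
        _ = M2 * ‖ζ - z‖^2 := by ring
    refine le_trans (Finset.sum_le_sum fun j _ => hterm j) ?_
    rw [Finset.sum_const, Finset.card_univ, Fintype.card_fin, nsmul_eq_mul]
  -- bound on Aζ
  have hAζb : ‖Aζ‖ ≤ ‖φ ζ z‖ + (-(r ζ)) + (1/2) * ‖Bq‖ := by
    have heq : Aζ = φ ζ z + (r ζ : ℂ) + (1/2:ℂ) * Bq := by rw [hφ ζ z, hF]; ring
    rw [heq]
    refine le_trans (norm_add_le _ _) ?_
    have h1 : ‖φ ζ z + (r ζ : ℂ)‖ ≤ ‖φ ζ z‖ + (-(r ζ)) := by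
      refine le_trans (norm_add_le _ _) ?_
      rw [Complex.norm_real, Real.norm_eq_abs, abs_of_nonpos hrζ]
    have h2 : ‖(1/2:ℂ) * Bq‖ ≤ (1/2) * ‖Bq‖ := by
      rw [norm_mul, show ‖(1/2:ℂ)‖ = 1/2 by norm_num]
    linarith
  have hAzb : ‖Az‖ ≤ ‖Aζ‖ + ‖Az - Aζ‖ := by
    have h := norm_add_le Aζ (Az - Aζ)
    simpa using h
  -- conclusion
  have ht2 : ‖ζ - z‖^2 ≤ (4/c₀) * ‖φ ζ z‖ := by
    have h := mul_le_mul_of_nonneg_left hφt2 hfrac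
    calc ‖ζ - z‖^2 = (4/c₀) * ((c₀/4) * ‖ζ - z‖^2) := by field_simp
      _ ≤ (4/c₀) * ‖φ ζ z‖ := h
  have hint := mul_le_mul_of_nonneg_left ht2 hcoef
  have hfinal : ‖Az‖ + ‖ζ - z‖^2 ≤ C * ‖φ ζ z‖ := by
    rw [hCdef]
    linarith [hAzb, hAζb, hAzAζ, hBqb, hrζφ, hint]
  calc C⁻¹ * (‖Az‖ + ‖ζ - z‖^2)
      ≤ C⁻¹ * (C * ‖φ ζ z‖) :=
        mul_le_mul_of_nonneg_left hfinal (inv_nonneg.2 hCpos.le)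
    _ = ‖φ ζ z‖ := by field_simp
end

section
/- Let $\gamma, \gamma^* > 0$ and $\phi, \phi^*, \bar\phi, \bar\phi^*$ be complex numbers with $\bar\phi = \overline{\phi}$, $\bar\phi^* = \overline{\phi^*}$, $|\phi - \phi^*| \le E_3$, and suppose $|\gamma - \gamma^*| \le E_1$ with $E_1/\gamma^*$ and $E_1/\gamma$ bounded by $B|\zeta - z|$. Then $\left| \frac{\gamma}{\gamma^*} \frac{\phi^*}{\bar\phi} - \frac{\gamma^*}{\gamma} \frac{\phi}{\bar\phi^*} \right| \le \frac{|\phi|\,E_3 + |\bar\phi^*|\,E_3}{|\bar\phi|\,|\bar\phi^*|} + B|\zeta-z|\left( \frac{|\phi^*|}{|\bar\phi|} + \frac{|\phi|}{|\bar\phi^*|} \right)$. -/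
open scoped ComplexConjugate

/-- The cancellation computation (case23) in Proposition 4.5: with `γ, γ* > 0`,
`φ̄ = conj φ`, `φ̄* = conj φ*`, near-symmetry `|φ - φ*| ≤ E₃`, and
`|γ - γ*| ≤ E₁` with `E₁/γ*` and `E₁/γ` bounded by `B d` (`d = |ζ-z|`), one has
`|γ/γ* ⬝ φ*/φ̄ - γ*/γ ⬝ φ/φ̄*| ≤ (|φ|E₃ + |φ̄*|E₃)/(|φ̄||φ̄*|) + B d (|φ*|/|φ̄| + |φ|/|φ̄*|)`. -/
theorem stmt_15 (γ γs : ℝ) (hγ : 0 < γ) (hγs : 0 < γs)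
    (φ φs bφ bφs : ℂ) (hφ0 : φ ≠ 0) (hφs0 : φs ≠ 0)
    (hbφ : bφ = conj φ) (hbφs : bφs = conj φs)
    (E₃ E₁ B d : ℝ) (hsym : ‖φ - φs‖ ≤ E₃)
    (hγγ : |γ - γs| ≤ E₁) (h1 : E₁ / γs ≤ B * d) (h2 : E₁ / γ ≤ B * d) :
    ‖(γ / γs : ℂ) * (φs / bφ) - (γs / γ : ℂ) * (φ / bφs)‖ ≤
      (‖φ‖ * E₃ + ‖bφs‖ * E₃) / (‖bφ‖ * ‖bφs‖) +
        B * d * (‖φs‖ / ‖bφ‖ + ‖φ‖ / ‖bφs‖) := by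
  have hbφ0 : bφ ≠ 0 := by simpa [hbφ] using hφ0
  have hbφs0 : bφs ≠ 0 := by simpa [hbφs] using hφs0
  have hγ0 : (γ : ℂ) ≠ 0 := by exact_mod_cast hγ.ne'
  have hγs0 : (γs : ℂ) ≠ 0 := by exact_mod_cast hγs.ne'
  have hE1 : 0 ≤ E₁ := le_trans (abs_nonneg _) hγγ
  have hBd : 0 ≤ B * d := le_trans (div_nonneg hE1 hγs.le) h1
  have key : (γ / γs : ℂ) * (φs / bφ) - (γs / γ : ℂ) * (φ / bφs)
      = ((φs - φ) * bφs + φ * (bφs - bφ)) / (bφ * bφs)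
        + (((γ : ℂ) - γs) / γs) * (φs / bφ) + (((γ : ℂ) - γs) / γ) * (φ / bφs) := by
    field_simp
    ring
  have hconj : ‖bφs - bφ‖ = ‖φs - φ‖ := by
    rw [hbφ, hbφs, ← map_sub, Complex.norm_conj]
  have hsym' : ‖φs - φ‖ ≤ E₃ := by
    rw [show φs - φ = -(φ - φs) by ring, norm_neg]; exact hsym
  have hr1 : ‖((γ : ℂ) - γs) / γs‖ ≤ B * d := by
    rw [← Complex.ofReal_sub, norm_div, Complex.norm_real, Complex.norm_real, Real.norm_eq_abs, Real.norm_eq_abs,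
      abs_of_pos hγs]
    exact le_trans (div_le_div_of_nonneg_right hγγ hγs.le) h1
  have hr2 : ‖((γ : ℂ) - γs) / γ‖ ≤ B * d := by
    rw [← Complex.ofReal_sub, norm_div, Complex.norm_real, Complex.norm_real, Real.norm_eq_abs, Real.norm_eq_abs,
      abs_of_pos hγ]
    exact le_trans (div_le_div_of_nonneg_right hγγ hγ.le) h2
  rw [key]
  refine le_trans (le_trans (norm_add_le _ _)
    (add_le_add_left (norm_add_le _ _) _)) ?_
  have t1 : ‖((φs - φ) * bφs + φ * (bφs - bφ)) / (bφ * bφs)‖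
      ≤ (‖φ‖ * E₃ + ‖bφs‖ * E₃) / (‖bφ‖ * ‖bφs‖) := by
    rw [norm_div, norm_mul]
    have hpos : 0 < ‖bφ‖ * ‖bφs‖ :=
      mul_pos (norm_pos_iff.mpr hbφ0) (norm_pos_iff.mpr hbφs0)
    apply div_le_div_of_nonneg_right ?_ hpos.le
    calc ‖(φs - φ) * bφs + φ * (bφs - bφ)‖
        ≤ ‖(φs - φ) * bφs‖ + ‖φ * (bφs - bφ)‖ := norm_add_le _ _
      _ = ‖φs - φ‖ * ‖bφs‖ + ‖φ‖ * ‖φs - φ‖ := by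
          rw [norm_mul, norm_mul, hconj]
      _ ≤ E₃ * ‖bφs‖ + ‖φ‖ * E₃ := by
          exact add_le_add (mul_le_mul_of_nonneg_right hsym' (norm_nonneg _))
            (mul_le_mul_of_nonneg_left hsym' (norm_nonneg _))
      _ = ‖φ‖ * E₃ + ‖bφs‖ * E₃ := by ring
  have t2 : ‖(((γ : ℂ) - γs) / γs) * (φs / bφ)‖
      ≤ B * d * (‖φs‖ / ‖bφ‖) := by
    rw [norm_mul, show ‖φs / bφ‖ = ‖φs‖ / ‖bφ‖ from norm_div _ _]
    exact mul_le_mul_of_nonneg_right hr1 (div_nonneg (norm_nonneg _) (norm_nonneg _))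
  have t3 : ‖(((γ : ℂ) - γs) / γ) * (φ / bφs)‖
      ≤ B * d * (‖φ‖ / ‖bφs‖) := by
    rw [norm_mul, show ‖φ / bφs‖ = ‖φ‖ / ‖bφs‖ from norm_div _ _]
    exact mul_le_mul_of_nonneg_right hr2 (div_nonneg (norm_nonneg _) (norm_nonneg _))
  have := add_le_add (add_le_add t1 t2) t3
  linarith [this]
end
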